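/- The map P defined on entire functions by P(g)(z) = (g'(z))² is not hypercyclic on H(ℂ): there is no entire function g such that for every entire function f and every ε > 0, R > 0 there exists n ∈ ℕ with sup_{|z| ≤ R} |P^n(g)(z) − f(z)| < ε. -/

import Mathlib

/-- The polynomial map `P(g)(z) = (g'(z))²` on functions `ℂ → ℂ`. -/
noncomputable def P (g : ℂ → ℂ) : ℂ → ℂ := fun z => (deriv g z) ^ 2

open Metric Set

lemma deriv_diff {g : ℂ → ℂ} (hg : Differentiable ℂ g) : Differentiable ℂ (deriv g) :=
  Complex.analyticOnNhd_univ_iff_differentiable.mp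
    (Complex.analyticOnNhd_univ_iff_differentiable.mpr hg).deriv

lemma key (c : ℂ) (hc : ‖c‖ = 1) (w : ℂ → ℂ) (hw : Differentiable ℂ w)
    (h : ∀ z : ℂ, ‖z‖ ≤ 1 → ‖w z ^ 2 - c * z‖ < 1/400) : False := by
  have habs : ∀ z : ℂ, ‖z‖ ≤ 1 → ‖w z‖ < 2 := by
    intro z hz
    have h1 := h z hz
    have hsub : ‖w z ^ 2‖ ≤ ‖w z ^ 2 - c * z‖ + ‖c * z‖ := by
      have := norm_sub_le (w z ^ 2 - c * z) (-(c * z))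
      simpa [sub_neg_eq_add, sub_add_cancel] using this
    have hcz : ‖c * z‖ ≤ 1 := by rw [norm_mul, hc, one_mul]; exact hz
    have h2 : ‖w z‖ ^ 2 < 4 := by
      rw [← norm_pow]; linarith
    nlinarith [norm_nonneg (w z)]
  have hw0 : ‖w 0‖ < 1/20 := by
    have h1 := h 0 (by simp)
    simp only [mul_zero, sub_zero, norm_pow] at h1
    nlinarith [norm_nonneg (w 0)]
  have hwmaps : MapsTo w (ball (0:ℂ) 1) (ball (w 0) 3) := by
    intro z hz
    rw [mem_ball, dist_eq_norm]
    have h1 := habs z (le_of_lt (by simpa using hz))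
    calc ‖w z - w 0‖ ≤ ‖w z‖ + ‖w 0‖ := norm_sub_le _ _
      _ < 3 := by linarith
  have hdw : ‖deriv w 0‖ ≤ 3 := by
    have := Complex.norm_deriv_le_div_of_mapsTo_ball (hw.differentiableOn) (hwmaps.mono_right ball_subset_closedBall) one_pos
    simpa using this
  set q : ℂ → ℂ := fun z => w z ^ 2 - c * z with hq
  have hqd : Differentiable ℂ q := (hw.pow 2).sub (differentiable_id.const_mul c)
  have hq0 : ‖q 0‖ < 1/400 := h 0 (by simp)
  have hqmaps : MapsTo q (ball (0:ℂ) 1) (ball (q 0) (1/200)) := by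
    intro z hz
    rw [mem_ball, dist_eq_norm]
    have h1 : ‖q z‖ < 1/400 := h z (le_of_lt (by simpa using hz))
    calc ‖q z - q 0‖ ≤ ‖q z‖ + ‖q 0‖ := norm_sub_le _ _
      _ < 1/200 := by linarith
  have hdq : ‖deriv q 0‖ ≤ 1/200 := by
    have := Complex.norm_deriv_le_div_of_mapsTo_ball (hqd.differentiableOn) (hqmaps.mono_right ball_subset_closedBall) one_pos
    simpa using this
  have hderiv : deriv q 0 = 2 * w 0 * deriv w 0 - c := by
    have h1 : HasDerivAt (fun z => w z ^ 2) (2 * w 0 * deriv w 0) 0 := by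
      have := (hw 0).hasDerivAt.fun_pow 2
      simpa [mul_comm, mul_assoc, mul_left_comm] using this
    have h2 : HasDerivAt (fun z : ℂ => c * z) c 0 := by
      simpa using (hasDerivAt_id (0:ℂ)).const_mul c
    exact (h1.sub h2).deriv
  have hlow : (1:ℝ) ≤ ‖deriv q 0‖ + ‖2 * w 0 * deriv w 0‖ := by
    have key2 : ‖c‖ ≤ ‖deriv q 0‖ + ‖2 * w 0 * deriv w 0‖ := by
      have : c = (2 * w 0 * deriv w 0) - deriv q 0 := by rw [hderiv]; ring
      calc ‖c‖ = ‖(2 * w 0 * deriv w 0) - deriv q 0‖ := by rw [← this]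
        _ ≤ ‖2 * w 0 * deriv w 0‖ + ‖deriv q 0‖ := norm_sub_le _ _
        _ = _ := by ring
    have : ‖c‖ = 1 := by rw [hc]
    linarith
  have hbig : ‖2 * w 0 * deriv w 0‖ ≤ 2 * (1/20) * 3 := by
    rw [norm_mul, norm_mul]
    have h1 : ‖w 0‖ ≤ 1/20 := le_of_lt (by simpa using hw0)
    have h2 : ‖(2:ℂ)‖ = 2 := by simp
    rw [h2]
    nlinarith [norm_nonneg (w 0), norm_nonneg (deriv w 0)]
  linarith

lemma P_diff : ∀ (n : ℕ) (g : ℂ → ℂ), Differentiable ℂ g → Differentiable ℂ (P^[n] g) := by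
  intro n
  induction n with
  | zero => intro g hg; simpa using hg
  | succ k ih =>
    intro g hg
    rw [Function.iterate_succ_apply']
    exact ((deriv_diff (ih g hg)).pow 2)

/-- `P(g) = (g')²` is not hypercyclic on the space of entire functions. -/
theorem P_not_hypercyclic :
    ¬ ∃ g : ℂ → ℂ, Differentiable ℂ g ∧
      ∀ f : ℂ → ℂ, Differentiable ℂ f → ∀ ε > (0 : ℝ), ∀ R > (0 : ℝ),
        ∃ n : ℕ, ∀ z : ℂ, ‖z‖ ≤ R →
          ‖(P^[n] g) z - f z‖ < ε := by
  rintro ⟨g, hg, H⟩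
  have hcase : ∀ (c : ℂ), ‖c‖ = 1 →
      ∀ n : ℕ, (∀ z : ℂ, ‖z‖ ≤ 1 → ‖(P^[n] g) z - c * z‖ < 1/400) →
      n = 0 := by
    intro c hc n hn
    by_contra h0
    obtain ⟨m, rfl⟩ := Nat.exists_eq_succ_of_ne_zero h0
    rw [Function.iterate_succ_apply'] at hn
    exact key c hc (deriv (P^[m] g)) (deriv_diff (P_diff m g hg))
      (fun z hz => hn z hz)
  obtain ⟨n, hn⟩ := H (fun z => (1:ℂ) * z) (by fun_prop) (1/400) (by norm_num) 1 one_pos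
  obtain ⟨m, hm⟩ := H (fun z => (-1:ℂ) * z) (by fun_prop) (1/400) (by norm_num) 1 one_pos
  have hn0 : n = 0 := hcase 1 (by simp) n hn
  have hm0 : m = 0 := hcase (-1) (by simp) m hm
  subst hn0; subst hm0
  have h1 := hn 1 (by simp)
  have h2 := hm 1 (by simp)
  simp only [Function.iterate_zero, id] at h1 h2
  have heq : (g 1 - 1*1) - (g 1 - (-1)*1) = -2 := by ring
  have htri : ‖(g 1 - 1*1) - (g 1 - (-1)*1)‖ ≤
      ‖g 1 - 1*1‖ + ‖g 1 - (-1)*1‖ := by simpa using norm_sub_le (g 1 - 1*1) (g 1 - (-1)*1)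
  rw [heq] at htri
  rw [show ‖(-2 : ℂ)‖ = 2 by simp] at htri
  norm_num at h1 h2 htri
  linarith [htri, h1, h2]
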